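/- Dilation of probabilistic combs to a deterministic comb: let H_0, …, H_{2N+1} be finite-dimensional complex Hilbert spaces and let R_1, …, R_k be positive semidefinite operators on ⊗_{j=0}^{2N+1} H_j such that R = Σ_{i=1}^k R_i satisfies the comb constraints: there exist operators R^{(n)} on ⊗_{j=0}^{2n+1} H_j with R^{(N)} = R, R^{(-1)} = 1, and Tr_{2n+1}[R^{(n)}] = I_{2n} ⊗ R^{(n-1)} for n = 0, …, N. Define R̃ = Σ_{i=1}^k R_i ⊗ |i⟩⟨i| on (⊗_{j=0}^{2N+1} H_j) ⊗ ℂᵏ, where {|i⟩} is the standard orthonormal basis of a classical register ℂᵏ appended to the last output H_{2N+1}, i.e., with the enlarged last output space H̃_{2N+1} := H_{2N+1} ⊗ ℂᵏ. Then R̃ is positive semidefinite and satisfies the comb constraints with the same R^{(n)} for n < N, namely Tr_{H̃_{2N+1}}[R̃] = I_{2N} ⊗ R^{(N-1)}; moreover each R_i is recovered from R̃ by the compression (I ⊗ ⟨i|) R̃ (I ⊗ |i⟩) onto the register state |i⟩. -/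

import Mathlib

open Matrix Kronecker ComplexOrder

/-- The partial trace over the last tensor factor of a matrix indexed by dependent tuples:
`(Tr_last M)_{p,q} = Σ_x M_{(p,x),(q,x)}`. -/
noncomputable def trLast {k : ℕ} {α : Fin (k + 1) → Type*} [∀ j, Fintype (α j)]
    (M : Matrix (∀ j, α j) (∀ j, α j) ℂ) :
    Matrix (∀ j : Fin k, α j.castSucc) (∀ j : Fin k, α j.castSucc) ℂ :=
  fun p q => ∑ x : α (Fin.last k), M (Fin.snoc p x) (Fin.snoc q x)

lemma kron_std_mulVec {m : Type*} [Fintype m] {k : ℕ}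
    (A : Matrix m m ℂ) (i : Fin k) (x : m × Fin k → ℂ) :
    (A ⊗ₖ Matrix.single i i (1:ℂ)) *ᵥ x =
      fun p => if p.2 = i then (A *ᵥ fun a => x (a, i)) p.1 else 0 := by
  ext ⟨a, b⟩
  simp only [mulVec, dotProduct, Fintype.sum_prod_type, kronecker_apply,
    Matrix.single, of_apply, ite_mul, one_mul, zero_mul, mul_ite, mul_one, mul_zero]
  by_cases hb : i = b
  · subst hb
    simp [Finset.sum_ite_eq]
  · simp [hb, Ne.symm hb]

lemma kron_std_psd {m : Type*} [Fintype m] [DecidableEq m] {k : ℕ}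
    {A : Matrix m m ℂ} (hA : A.PosSemidef) (i : Fin k) :
    (A ⊗ₖ Matrix.single i i (1:ℂ)).PosSemidef := by
  refine PosSemidef.of_dotProduct_mulVec_nonneg ?_ ?_
  · ext ⟨a,b⟩ ⟨c,e⟩
    simp only [conjTranspose_apply, kronecker_apply, Matrix.single, of_apply,
      star_mul', hA.1.apply]
    by_cases h1 : i = e <;> by_cases h2 : i = b <;> simp [h1, h2, and_comm]
  · intro x
    rw [kron_std_mulVec]
    have h := hA.dotProduct_mulVec_nonneg (fun a => x (a, i))
    calc (0:ℂ) ≤ star (fun a => x (a, i)) ⬝ᵥ A *ᵥ (fun a => x (a, i)) := h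
    _ = _ := by
        simp only [dotProduct, Fintype.sum_prod_type, Pi.star_apply, mul_ite, mul_zero]
        rw [Finset.sum_comm]
        simp [Finset.sum_ite_eq]

lemma psd_add {m : Type*} [Fintype m] {A B : Matrix m m ℂ}
    (hA : A.PosSemidef) (hB : B.PosSemidef) : (A + B).PosSemidef := by
  refine PosSemidef.of_dotProduct_mulVec_nonneg (hA.1.add hB.1) fun x => ?_
  rw [add_mulVec, dotProduct_add]
  exact add_nonneg (hA.dotProduct_mulVec_nonneg x) (hB.dotProduct_mulVec_nonneg x)

lemma psd_sum {m : Type*} [Fintype m] {k : ℕ}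
    (M : Fin k → Matrix m m ℂ) (h : ∀ i, (M i).PosSemidef) :
    (∑ i, M i).PosSemidef :=
  Finset.sum_induction M _ (fun _ _ ha hb => psd_add ha hb) Matrix.PosSemidef.zero
    (fun i _ => h i)

/-- Dilation of probabilistic combs to a deterministic comb: let
`H_0, …, H_{2N+1}` be finite-dimensional complex Hilbert spaces (`H_j = ℂ^{d j}`) and let
`R_1, …, R_k ≥ 0` on `⊗_{j=0}^{2N+1} H_j` be such that `R = Σ_i R_i` satisfies the comb
constraints: there is a chain (encoded as `T (n+1) = R^{(n)}`, `T 0 = R^{(-1)} = 1`,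
`T (N+1) = R^{(N)} = R`) with `Tr_{2n+1}[R^{(n)}] = I_{2n} ⊗ R^{(n-1)}` for `n = 0, …, N`.
Define `R̃ = Σ_i R_i ⊗ |i⟩⟨i|` on `(⊗_j H_j) ⊗ ℂᵏ`, where `{|i⟩}` is the standard basis of a
classical register `ℂᵏ` appended to the last output `H_{2N+1}` (i.e. the enlarged last
output is `H̃_{2N+1} = H_{2N+1} ⊗ ℂᵏ`).  Then `R̃` is positive semidefinite and satisfies the
comb constraints with the same `R^{(n)}` for `n < N`, namely
`Tr_{H̃_{2N+1}}[R̃] = I_{2N} ⊗ R^{(N-1)}`; moreover each `R_i` is recovered from `R̃` by the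
compression `(I ⊗ ⟨i|) R̃ (I ⊗ |i⟩)` onto the register state `|i⟩`. -/
theorem probabilistic_comb_dilation (N : ℕ) (d : Fin (2*N+2) → ℕ) (k : ℕ)
    (Rm : Fin k → Matrix (∀ j, Fin (d j)) (∀ j, Fin (d j)) ℂ)
    (hRm : ∀ i, (Rm i).PosSemidef)
    (T : ∀ n : Fin (N+2), Matrix (∀ j : Fin (2*n.val), Fin (d (j.castLE (by omega))))
                                 (∀ j : Fin (2*n.val), Fin (d (j.castLE (by omega)))) ℂ)
    (hT0 : T 0 = 1)
    (hTN : T (Fin.last (N+1)) = ∑ i, Rm i)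
    (hstep : ∀ n : Fin (N+1),
      trLast (T n.succ) = fun p q =>
        (if p (Fin.last (2*n.val)) = q (Fin.last (2*n.val)) then (1:ℂ) else 0) *
          T n.castSucc (fun j => p j.castSucc) (fun j => q j.castSucc)) :
    ((∑ i, Rm i ⊗ₖ Matrix.single i i (1:ℂ)).PosSemidef) ∧
    ((fun (p q : ∀ j : Fin (2*N+1), Fin (d j.castSucc)) =>
        ∑ x : Fin (d (Fin.last (2*N+1))), ∑ i : Fin k,
          (∑ i', Rm i' ⊗ₖ Matrix.single i' i' (1:ℂ))
            (Fin.snoc p x, i) (Fin.snoc q x, i)) =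
      fun p q =>
        (if p (Fin.last (2*N)) = q (Fin.last (2*N)) then (1:ℂ) else 0) *
          T ⟨N, by omega⟩ (fun j => p j.castSucc) (fun j => q j.castSucc)) ∧
    (∀ i : Fin k,
      (fun p q => (∑ i', Rm i' ⊗ₖ Matrix.single i' i' (1:ℂ)) (p, i) (q, i)) = Rm i) := by
  refine ⟨psd_sum _ fun i => kron_std_psd (hRm i) i, ?_, ?_⟩
  · have h2 := hstep (Fin.last N)
    rw [show T (Fin.last N).succ = ∑ i, Rm i from hTN] at h2
    have key : (fun (p q : ∀ j : Fin (2*N+1), Fin (d j.castSucc)) =>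
        ∑ x : Fin (d (Fin.last (2*N+1))), ∑ i : Fin k,
          (∑ i', Rm i' ⊗ₖ Matrix.single i' i' (1:ℂ))
            (Fin.snoc p x, i) (Fin.snoc q x, i)) = trLast (∑ i, Rm i) := by
      funext p q
      unfold trLast
      refine Finset.sum_congr rfl fun x _ => ?_
      simp only [Matrix.sum_apply, kronecker_apply, Matrix.single, of_apply]
      rw [Finset.sum_comm]
      simp [Finset.sum_ite_eq]
    rw [key]
    exact h2
  · intro i
    funext p q
    simp only [Matrix.sum_apply, kronecker_apply, Matrix.single, of_apply]
    simp [Finset.sum_ite_eq]
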